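/- arXiv:0904.1412 — 5 statements merged into one kernel-verified Lean document; each statement's English description precedes it below -/
import Mathlib

section
/- Let E be a nonzero finite-dimensional real inner product space and let A : E → E be a linear isometry such that neither 1 nor -1 is an eigenvalue of A (i.e. ker(A - id) = ker(A + id) = {0}). Then every linear isometry g : E → E that commutes with A (g∘A = A∘g) has determinant 1. -/
open Polynomial Module LinearMap

/-- Every real polynomial of odd natDegree has a root. -/
lemma auxStmt2_odd_root (p : Polynomial ℝ) (hp : Odd p.natDegree) : ∃ x : ℝ, p.IsRoot x := by
  have hn0 : p.natDegree ≠ 0 := by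
    intro h; rw [h] at hp; exact (Nat.not_odd_iff_even.mpr Even.zero) hp
  have hp0 : p ≠ 0 := fun h => hn0 (by simp [h])
  have hdeg : 0 < p.degree := natDegree_pos_iff_degree_pos.mp (Nat.pos_of_ne_zero hn0)
  wlog hlc : 0 < p.leadingCoeff generalizing p
  · have hlc' : 0 < (-p).leadingCoeff := by
      rw [leadingCoeff_neg]
      rcases (leadingCoeff_ne_zero.mpr hp0).lt_or_gt with h | h
      · linarith
      · exact absurd h (by simpa using hlc)
    obtain ⟨x, hx⟩ := this (-p) (by simpa using hp) (by simpa using hn0) (by simpa using hp0)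
      (by simpa using hdeg) hlc'
    exact ⟨x, by simpa using hx⟩
  have htop : Filter.Tendsto (fun x => p.eval x) Filter.atTop Filter.atTop :=
    p.tendsto_atTop_of_leadingCoeff_nonneg hdeg hlc.le
  have hXne : (-X : Polynomial ℝ).natDegree ≠ 0 := by simp
  have hnegone : ((-X : Polynomial ℝ)).leadingCoeff = -1 := by simp
  have hcomp_nd : (p.comp (-X)).natDegree = p.natDegree := by
    rw [natDegree_comp]; simp
  have hcomp_lc : (p.comp (-X)).leadingCoeff ≤ 0 := by
    rw [leadingCoeff_comp hXne, hnegone]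
    obtain ⟨k, hk⟩ := hp
    rw [hk]
    have h1 : (-1 : ℝ) ^ (2 * k + 1) = -1 := by
      rw [pow_succ, pow_mul]; norm_num
    rw [h1]; linarith
  have hcomp_deg : 0 < (p.comp (-X)).degree := by
    rw [← natDegree_pos_iff_degree_pos] at hdeg ⊢
    omega
  have hbot : Filter.Tendsto (fun x => (p.comp (-X)).eval x) Filter.atTop Filter.atBot :=
    tendsto_atBot_of_leadingCoeff_nonpos _ hcomp_deg hcomp_lc
  obtain ⟨a, ha⟩ := (htop.eventually_gt_atTop 0).exists
  obtain ⟨b, hb⟩ := (hbot.eventually_lt_atBot 0).exists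
  have hb' : p.eval (-b) < 0 := by simpa [eval_comp] using hb
  have hIVT := intermediate_value_univ (-b) a (f := fun x => p.eval x) p.continuous
  obtain ⟨x, hx⟩ := hIVT ⟨hb'.le, ha.le⟩
  exact ⟨x, hx⟩

/-- Evaluation of the characteristic polynomial of a matrix. -/
lemma auxStmt2_eval_charpoly_mat {n : Type*} [DecidableEq n] [Fintype n]
    (M : Matrix n n ℝ) (μ : ℝ) :
    M.charpoly.eval μ = (μ • (1 : Matrix n n ℝ) - M).det := by
  rw [Matrix.charpoly, ← Polynomial.coe_evalRingHom, RingHom.map_det]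
  congr 1
  ext i j
  by_cases h : i = j
  · subst h
    simp [Matrix.charmatrix_apply, Matrix.one_apply, Matrix.smul_apply]
  · simp [Matrix.charmatrix_apply, Matrix.one_apply, Matrix.smul_apply, h,
      Matrix.diagonal_apply_ne _ h]

/-- Evaluation of the characteristic polynomial of an endomorphism. -/
lemma auxStmt2_eval_charpoly {M : Type*} [AddCommGroup M] [Module ℝ M]
    [Module.Finite ℝ M] [Module.Free ℝ M] (φ : M →ₗ[ℝ] M) (μ : ℝ) :
    φ.charpoly.eval μ = LinearMap.det (μ • LinearMap.id - φ) := by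
  classical
  let b := Module.Free.chooseBasis ℝ M
  rw [← φ.charpoly_toMatrix b, auxStmt2_eval_charpoly_mat,
    ← LinearMap.det_toMatrix b]
  congr 1
  rw [map_sub, map_smul, LinearMap.toMatrix_id]

/-- A root of the characteristic polynomial gives an eigenvector. -/
lemma auxStmt2_eigen_of_root {M : Type*} [AddCommGroup M] [Module ℝ M]
    [Module.Finite ℝ M] [Module.Free ℝ M] (φ : M →ₗ[ℝ] M) (μ : ℝ)
    (h : φ.charpoly.IsRoot μ) : ∃ x : M, x ≠ 0 ∧ φ x = μ • x := by
  have hdet : LinearMap.det (μ • LinearMap.id - φ) = 0 := by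
    rw [← auxStmt2_eval_charpoly]; exact h
  have hker := LinearMap.bot_lt_ker_of_det_eq_zero hdet
  obtain ⟨x, hx, hx0⟩ := Submodule.exists_mem_ne_zero_of_ne_bot hker.ne'
  refine ⟨x, hx0, ?_⟩
  have := LinearMap.mem_ker.mp hx
  simp only [LinearMap.sub_apply, LinearMap.smul_apply, LinearMap.id_apply] at this
  linear_combination (norm := module) -this

/-- If all real eigenvalues of `φ` are `≥ 1`, then `det φ > 0`. -/
lemma auxStmt2_det_pos {M : Type*} [AddCommGroup M] [Module ℝ M]
    [Module.Finite ℝ M] [Module.Free ℝ M] (φ : M →ₗ[ℝ] M)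
    (hroot : ∀ μ : ℝ, μ < 1 → ∀ x : M, φ x = μ • x → x = 0) :
    0 < LinearMap.det φ := by
  classical
  set p := φ.charpoly with hp
  set n := Module.finrank ℝ M with hn
  have hmonic : p.Monic := φ.charpoly_monic
  have hnd : p.natDegree = n := φ.charpoly_natDegree
  have hnoroot : ∀ μ : ℝ, μ < 1 → ¬ p.IsRoot μ := by
    intro μ hμ hroot'
    obtain ⟨x, hx0, hxe⟩ := auxStmt2_eigen_of_root φ μ hroot'
    exact hx0 (hroot μ hμ x hxe)
  set q : Polynomial ℝ := C ((-1 : ℝ) ^ n) * p.comp (-X) with hq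
  have hqeval : ∀ x : ℝ, q.eval x = (-1) ^ n * p.eval (-x) := by
    intro x; simp [hq, eval_comp]
  have hqne : ∀ x : ℝ, 0 ≤ x → q.eval x ≠ 0 := by
    intro x hx h
    rw [hqeval] at h
    rcases mul_eq_zero.mp h with h | h
    · exact (pow_ne_zero n (by norm_num : (-1:ℝ) ≠ 0)) h
    · exact hnoroot (-x) (by linarith) h
  have hT : ∃ T : ℝ, 0 ≤ T ∧ 0 < q.eval T := by
    rcases Nat.eq_zero_or_pos n with h0 | hpos
    · refine ⟨0, le_refl _, ?_⟩
      have : p = 1 := hmonic.natDegree_eq_zero.mp (by omega)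
      rw [hqeval]
      simp [this, h0]
    · have hXne : (-X : Polynomial ℝ).natDegree ≠ 0 := by simp
      have hlc : q.leadingCoeff = 1 := by
        rw [hq, leadingCoeff_mul, leadingCoeff_C, leadingCoeff_comp hXne, hmonic.leadingCoeff]
        rw [hnd, one_mul]
        simp only [leadingCoeff_neg, leadingCoeff_X]
        rw [← pow_add, ← two_mul, pow_mul]
        norm_num
      have hqnd : q.natDegree = n := by
        rw [hq, natDegree_C_mul (by positivity : ((-1:ℝ)^n) ≠ 0), natDegree_comp]
        simp [hnd]
      have hqdeg : 0 < q.degree := by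
        rw [← natDegree_pos_iff_degree_pos]; omega
      have htop : Filter.Tendsto (fun x => q.eval x) Filter.atTop Filter.atTop :=
        q.tendsto_atTop_of_leadingCoeff_nonneg hqdeg (by rw [hlc]; norm_num)
      obtain ⟨T, hT1, hT2⟩ := ((htop.eventually_gt_atTop 0).and (Filter.eventually_ge_atTop 0)).exists
      exact ⟨T, hT2, hT1⟩
  obtain ⟨T, hT0, hTpos⟩ := hT
  have hq0 : 0 < q.eval 0 := by
    rcases lt_trichotomy (q.eval 0) 0 with h | h | h
    · exfalso
      have hIVT := intermediate_value_Icc hT0 (q.continuousOn)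
      obtain ⟨x, hxmem, hx⟩ := hIVT ⟨h.le, hTpos.le⟩
      exact hqne x hxmem.1 hx
    · exact absurd h (hqne 0 le_rfl)
    · exact h
  have hdet : LinearMap.det φ = (-1) ^ n * p.eval 0 := by
    rw [LinearMap.det_eq_sign_charpoly_coeff, coeff_zero_eq_eval_zero]
  rw [hdet]
  have := hqeval 0
  rw [neg_zero] at this
  linarith [hq0, this]


/-- Determinant is multiplicative over an invariant complementary pair of submodules. -/
lemma auxStmt2_det_decomp {E : Type*} [AddCommGroup E] [Module ℝ E] [Module.Finite ℝ E]
    (V W : Submodule ℝ E) (h : IsCompl V W) (f : E →ₗ[ℝ] E)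
    (hV : ∀ x ∈ V, f x ∈ V) (hW : ∀ x ∈ W, f x ∈ W) :
    LinearMap.det f = LinearMap.det (f.restrict hV) * LinearMap.det (f.restrict hW) := by
  classical
  set e := Submodule.prodEquivOfIsCompl V W h with he
  set F := (f.restrict hV).prodMap (f.restrict hW) with hF
  have hf : f = (e : V × W →ₗ[ℝ] E) ∘ₗ F ∘ₗ (e.symm : E →ₗ[ℝ] V × W) := by
    ext x
    obtain ⟨z, rfl⟩ := e.surjective x
    simp only [LinearMap.comp_apply, LinearEquiv.coe_coe, LinearEquiv.symm_apply_apply]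
    rw [Submodule.coe_prodEquivOfIsCompl', Submodule.coe_prodEquivOfIsCompl']
    simp only [hF, LinearMap.prodMap_apply, LinearMap.restrict_coe_apply, map_add]
  conv_lhs => rw [hf]
  rw [LinearMap.det_conj]
  let bV := Module.Free.chooseBasis ℝ V
  let bW := Module.Free.chooseBasis ℝ W
  rw [← LinearMap.det_toMatrix (bV.prod bW), LinearMap.toMatrix_prodMap,
    Matrix.det_fromBlocks_zero₂₁, LinearMap.det_toMatrix, LinearMap.det_toMatrix]

/-- The determinant of a linear isometry squares to one. -/
lemma auxStmt2_det_sq {E : Type*} [NormedAddCommGroup E] [InnerProductSpace ℝ E]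
    [FiniteDimensional ℝ E] (g : E →ₗᵢ[ℝ] E) :
    LinearMap.det g.toLinearMap * LinearMap.det g.toLinearMap = 1 := by
  have hadj : LinearMap.adjoint g.toLinearMap ∘ₗ g.toLinearMap = LinearMap.id := by
    ext x
    refine ext_inner_right ℝ fun y => ?_
    simp only [LinearMap.comp_apply, LinearMap.id_apply]
    rw [LinearMap.adjoint_inner_left]
    exact g.inner_map_map x y
  have hdet : LinearMap.det (LinearMap.adjoint g.toLinearMap) = LinearMap.det g.toLinearMap := by
    classical
    let b := stdOrthonormalBasis ℝ E
    rw [← LinearMap.det_toMatrix b.toBasis, ← LinearMap.det_toMatrix b.toBasis,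
      LinearMap.toMatrix_adjoint, Matrix.det_conjTranspose]
    simp
  have h := LinearMap.det_comp (LinearMap.adjoint g.toLinearMap) g.toLinearMap
  rw [hadj, LinearMap.det_id, hdet] at h
  linarith

/-- Let `E` be a nonzero finite-dimensional real inner product space and `A` a linear
isometry of `E` such that neither `1` nor `-1` is an eigenvalue of `A`
(`ker (A - id) = ker (A + id) = ⊥`).  Then every linear isometry `g` of `E`
commuting with `A` has determinant `1`. -/
theorem stmt_2 {E : Type*} [NormedAddCommGroup E] [InnerProductSpace ℝ E]
    [FiniteDimensional ℝ E] [Nontrivial E]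
    (A g : E →ₗᵢ[ℝ] E)
    (h1 : LinearMap.ker (A.toLinearMap - LinearMap.id) = ⊥)
    (h2 : LinearMap.ker (A.toLinearMap + LinearMap.id) = ⊥)
    (hcomm : g.toLinearMap ∘ₗ A.toLinearMap = A.toLinearMap ∘ₗ g.toLinearMap) :
    LinearMap.det g.toLinearMap = 1 := by
  classical
  set G := g.toLinearMap with hGdef
  set V := LinearMap.ker (G + LinearMap.id) with hVdef
  have hmemV : ∀ x : E, x ∈ V ↔ G x = -x := by
    intro x
    rw [hVdef, LinearMap.mem_ker, LinearMap.add_apply, LinearMap.id_apply,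
      add_eq_zero_iff_eq_neg]
  have hVg : ∀ x ∈ V, G x ∈ V := by
    intro x hx
    rw [hmemV] at hx ⊢
    rw [hx, map_neg, hx]
  have hVA : ∀ x ∈ V, A.toLinearMap x ∈ V := by
    intro x hx
    rw [hmemV] at hx ⊢
    have hc := LinearMap.congr_fun hcomm x
    simp only [LinearMap.comp_apply] at hc
    show G (A.toLinearMap x) = -(A.toLinearMap x)
    rw [hc, hx, map_neg]
  have hWg : ∀ x ∈ Vᗮ, G x ∈ Vᗮ := by
    intro x hx
    rw [Submodule.mem_orthogonal] at hx ⊢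
    intro u hu
    have hu' : G u = -u := (hmemV u).mp hu
    have h1' : (inner ℝ (G u) (G x) : ℝ) = inner ℝ u x := g.inner_map_map u x
    rw [hu', inner_neg_left] at h1'
    have h2' := hx u hu
    linarith
  have hcompl : IsCompl V Vᗮ := Submodule.isCompl_orthogonal_of_hasOrthogonalProjection
  -- the (-1)-eigenspace of g has even dimension
  have hVeven : Even (finrank ℝ V) := by
    by_contra hodd
    rw [Nat.not_even_iff_odd] at hodd
    set AV := A.toLinearMap.restrict hVA with hAV
    obtain ⟨μ, hμ⟩ := auxStmt2_odd_root AV.charpoly (by rw [AV.charpoly_natDegree]; exact hodd)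
    obtain ⟨x, hx0, hxe⟩ := auxStmt2_eigen_of_root AV μ hμ
    have hcoe : A.toLinearMap (x : E) = μ • (x : E) := by
      have h := congrArg (Subtype.val) hxe
      simpa [hAV, LinearMap.restrict_coe_apply] using h
    have hxE0 : (x : E) ≠ 0 := fun h => hx0 (Subtype.ext h)
    have hnorm : |μ| * ‖(x : E)‖ = ‖(x : E)‖ := by
      calc |μ| * ‖(x : E)‖ = ‖μ • (x : E)‖ := by rw [norm_smul, Real.norm_eq_abs]
        _ = ‖A.toLinearMap (x : E)‖ := by rw [hcoe]
        _ = ‖(x : E)‖ := A.norm_map _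
    have habs : |μ| = 1 := by
      have h0 : ‖(x : E)‖ ≠ 0 := norm_ne_zero_iff.mpr hxE0
      rw [← one_mul ‖(x : E)‖] at hnorm
      exact mul_right_cancel₀ h0 (by linarith [hnorm])
    rcases (abs_eq (by norm_num : (0:ℝ) ≤ 1)).mp habs with h | h
    · have hm : (x : E) ∈ LinearMap.ker (A.toLinearMap - LinearMap.id) := by
        rw [LinearMap.mem_ker, LinearMap.sub_apply, LinearMap.id_apply, hcoe, h, one_smul,
          sub_self]
      rw [h1, Submodule.mem_bot] at hm
      exact hxE0 hm
    · have hm : (x : E) ∈ LinearMap.ker (A.toLinearMap + LinearMap.id) := by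
        rw [LinearMap.mem_ker, LinearMap.add_apply, LinearMap.id_apply, hcoe, h, neg_one_smul,
          neg_add_cancel]
      rw [h2, Submodule.mem_bot] at hm
      exact hxE0 hm
  -- determinant of the restriction to V
  have hdetV : LinearMap.det (G.restrict hVg) = 1 := by
    have hres : G.restrict hVg = (-1 : ℝ) • (LinearMap.id : V →ₗ[ℝ] V) := by
      ext x
      rw [LinearMap.restrict_coe_apply, (hmemV _).mp x.2]
      simp
    rw [hres, LinearMap.det_smul, LinearMap.det_id, mul_one, Even.neg_one_pow hVeven]
  -- determinant of the restriction to Vᗮ is positive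
  have hdetW : 0 < LinearMap.det (G.restrict hWg) := by
    apply auxStmt2_det_pos
    intro μ hμ x hxe
    by_contra hx0
    have hcoe : G (x : E) = μ • (x : E) := by
      have h := congrArg (Subtype.val) hxe
      simpa [LinearMap.restrict_coe_apply] using h
    have hxE0 : (x : E) ≠ 0 := fun h => hx0 (Subtype.ext h)
    have hnorm : |μ| * ‖(x : E)‖ = ‖(x : E)‖ := by
      calc |μ| * ‖(x : E)‖ = ‖μ • (x : E)‖ := by rw [norm_smul, Real.norm_eq_abs]
        _ = ‖G (x : E)‖ := by rw [hcoe]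
        _ = ‖(x : E)‖ := g.norm_map _
    have habs : |μ| = 1 := by
      have h0 : ‖(x : E)‖ ≠ 0 := norm_ne_zero_iff.mpr hxE0
      rw [← one_mul ‖(x : E)‖] at hnorm
      exact mul_right_cancel₀ h0 (by linarith [hnorm])
    rcases (abs_eq (by norm_num : (0:ℝ) ≤ 1)).mp habs with h | h
    · exact absurd h (by linarith)
    · have hmV : (x : E) ∈ V := by
        rw [hmemV, hcoe, h, neg_one_smul]
      have hboth : (x : E) ∈ V ⊓ Vᗮ := ⟨hmV, x.2⟩
      have := (V.orthogonal_disjoint).le_bot hboth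
      exact hxE0 (Submodule.mem_bot ℝ |>.mp this)
  have hdec := auxStmt2_det_decomp V Vᗮ hcompl G hVg hWg
  rw [hdetV, one_mul] at hdec
  have hsq := auxStmt2_det_sq g
  rw [← hGdef] at hsq
  have hfac : (LinearMap.det G - 1) * (LinearMap.det G + 1) = 0 := by nlinarith [hsq]
  rcases mul_eq_zero.mp hfac with h | h
  · linarith
  · rw [hdec] at h; linarith
end

section
/- With the above notation: 𝔥 is the internal direct sum 𝔤₀ ⊕ 𝔤_k, 𝔤 is the internal direct sum 𝔥 ⊕ 𝔪, τ(𝔪) = 𝔪, and [𝔥, 𝔪] ⊆ 𝔪, so every ξ ∈ 𝔥 induces an endomorphism ad_𝔪 ξ : 𝔪 → 𝔪, Y ↦ [ξ, Y]. Assume moreover that the pair (𝔤, 𝔥) is effective, i.e. the only ξ ∈ 𝔥 with [ξ, Y] = 0 for all Y ∈ 𝔪 is ξ = 0. Then 𝔤₀ = {ξ ∈ 𝔥 : ad_𝔪 ξ ∘ τ|_𝔪 = τ|_𝔪 ∘ ad_𝔪 ξ} and 𝔤_k = {ξ ∈ 𝔥 : ad_𝔪 ξ ∘ τ|_𝔪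 = -τ|_𝔪 ∘ ad_𝔪 ξ}. -/
/-- Let `𝔤` be a real Lie algebra, `k ≥ 1`, and `τ` a Lie algebra automorphism of `𝔤`
with `τ^{2k} = id`.  Set `𝔤₀ := ker (τ - id)`, `𝔤_k := ker (τ + id)`,
`𝔥 := ker (τ∘τ - id)` and `𝔪 := range (τ∘τ - id)`.  Then `𝔥 = 𝔤₀ ⊕ 𝔤_k` and
`𝔤 = 𝔥 ⊕ 𝔪` (internal direct sums), `τ(𝔪) = 𝔪`, and `⁅𝔥, 𝔪⁆ ⊆ 𝔪`, so each `ξ ∈ 𝔥`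
induces `ad_𝔪 ξ : 𝔪 → 𝔪, Y ↦ ⁅ξ, Y⁆`.  If moreover `(𝔤, 𝔥)` is effective (the only
`ξ ∈ 𝔥` with `⁅ξ, Y⁆ = 0` for all `Y ∈ 𝔪` is `ξ = 0`), then
`𝔤₀ = {ξ ∈ 𝔥 : ad_𝔪 ξ ∘ τ|_𝔪 = τ|_𝔪 ∘ ad_𝔪 ξ}` and
`𝔤_k = {ξ ∈ 𝔥 : ad_𝔪 ξ ∘ τ|_𝔪 = -τ|_𝔪 ∘ ad_𝔪 ξ}`. -/
theorem stmt_8 {L : Type*} [LieRing L] [LieAlgebra ℝ L]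
    (k : ℕ) (hk : 1 ≤ k) (τ : L ≃ₗ⁅ℝ⁆ L)
    (hτ : (τ.toLieHom.toLinearMap : Module.End ℝ L) ^ (2 * k) = 1)
    (g0 gk h m : Submodule ℝ L)
    (hg0 : g0 = LinearMap.ker ((τ.toLieHom.toLinearMap : Module.End ℝ L) - 1))
    (hgk : gk = LinearMap.ker ((τ.toLieHom.toLinearMap : Module.End ℝ L) + 1))
    (hh : h = LinearMap.ker
      ((τ.toLieHom.toLinearMap : Module.End ℝ L) * τ.toLieHom.toLinearMap - 1))
    (hm : m = LinearMap.range
      ((τ.toLieHom.toLinearMap : Module.End ℝ L) * τ.toLieHom.toLinearMap - 1))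
    (heff : ∀ ξ ∈ h, (∀ Y ∈ m, ⁅ξ, Y⁆ = (0 : L)) → ξ = 0) :
    (g0 ⊔ gk = h ∧ g0 ⊓ gk = ⊥) ∧
    (h ⊔ m = ⊤ ∧ h ⊓ m = ⊥) ∧
    Submodule.map (τ.toLieHom.toLinearMap : Module.End ℝ L) m = m ∧
    (∀ ξ ∈ h, ∀ Y ∈ m, ⁅ξ, Y⁆ ∈ m) ∧
    (g0 : Set L) = {ξ | ξ ∈ h ∧ ∀ Y ∈ m, ⁅ξ, τ Y⁆ = τ ⁅ξ, Y⁆} ∧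
    (gk : Set L) = {ξ | ξ ∈ h ∧ ∀ Y ∈ m, ⁅ξ, τ Y⁆ = -τ ⁅ξ, Y⁆} := by
  classical
  set T : Module.End ℝ L := τ.toLieHom.toLinearMap with hT
  have hTapp : ∀ x : L, T x = τ x := fun x => rfl
  have hTinj : Function.Injective T := τ.injective
  set U : Module.End ℝ L := T * T with hUdef
  have hUk : U ^ k = 1 := by
    rw [hUdef, ← sq, ← pow_mul]; exact hτ
  have hTlie : ∀ x y : L, T ⁅x, y⁆ = ⁅T x, T y⁆ := fun x y => τ.map_lie' ..
  -- membership characterizations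
  have mem_g0 : ∀ x : L, x ∈ g0 ↔ T x = x := by
    intro x
    rw [hg0, LinearMap.mem_ker, LinearMap.sub_apply, Module.End.one_apply, sub_eq_zero]
  have mem_gk : ∀ x : L, x ∈ gk ↔ T x = -x := by
    intro x
    rw [hgk, LinearMap.mem_ker, LinearMap.add_apply, Module.End.one_apply,
      add_eq_zero_iff_eq_neg]
  have mem_h : ∀ x : L, x ∈ h ↔ U x = x := by
    intro x
    rw [hh, LinearMap.mem_ker, LinearMap.sub_apply, Module.End.one_apply, sub_eq_zero]
  have mem_m : ∀ x : L, x ∈ m ↔ ∃ y : L, U y - y = x := by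
    intro x
    rw [hm, LinearMap.mem_range]
    constructor
    · rintro ⟨y, hy⟩; exact ⟨y, hy⟩
    · rintro ⟨y, hy⟩; exact ⟨y, hy⟩
  have hg0h : g0 ≤ h := by
    intro x hx
    rw [mem_g0] at hx
    rw [mem_h, hUdef, Module.End.mul_apply, hx, hx]
  have hgkh : gk ≤ h := by
    intro x hx
    rw [mem_gk] at hx
    rw [mem_h, hUdef, Module.End.mul_apply, hx, map_neg, hx, neg_neg]
  -- decomposition of elements of h
  have hdecomp : ∀ ξ ∈ h, ((1:ℝ)/2) • (ξ + T ξ) ∈ g0 ∧ ((1:ℝ)/2) • (ξ - T ξ) ∈ gk ∧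
      ξ = ((1:ℝ)/2) • (ξ + T ξ) + ((1:ℝ)/2) • (ξ - T ξ) := by
    intro ξ hξ
    rw [mem_h] at hξ
    have hξ' : T (T ξ) = ξ := hξ
    refine ⟨?_, ?_, ?_⟩
    · rw [mem_g0, map_smul, map_add, hξ']
      rw [add_comm]
    · rw [mem_gk, map_smul, map_sub, hξ', ← smul_neg]
      rw [neg_sub]
    · rw [← smul_add]
      rw [show ξ + T ξ + (ξ - T ξ) = (2:ℝ) • ξ by rw [two_smul]; abel]
      rw [smul_smul]; norm_num
  have htwo : ∀ x : L, x = -x → x = 0 := by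
    intro x hx
    have h2 : (2:ℝ) • x = 0 := by rw [two_smul]; nth_rewrite 2 [hx]; abel
    simpa using (smul_eq_zero.mp h2).resolve_left (by norm_num)
  -- Part 1
  have part1a : g0 ⊔ gk = h := by
    apply le_antisymm (sup_le hg0h hgkh)
    intro ξ hξ
    obtain ⟨h1, h2, h3⟩ := hdecomp ξ hξ
    rw [h3]
    exact Submodule.add_mem_sup h1 h2
  have part1b : g0 ⊓ gk = ⊥ := by
    rw [eq_bot_iff]
    intro x hx
    obtain ⟨hx1, hx2⟩ := Submodule.mem_inf.mp hx
    rw [mem_g0] at hx1; rw [mem_gk] at hx2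
    have hxx : x = -x := by conv_lhs => rw [← hx1, hx2]
    simpa using htwo x hxx
  -- geometric sum operator
  set S : Module.End ℝ L := ∑ i ∈ Finset.range k, U ^ i with hSdef
  have hUS : (U - 1) * S = 0 := by
    rw [hSdef, mul_geom_sum, hUk, sub_self]
  have hSU : S * (U - 1) = 0 := by
    rw [hSdef, geom_sum_mul, hUk, sub_self]
  have hkR : (k : ℝ) ≠ 0 := by positivity
  -- the correcting operator
  have hC : ∃ C : Module.End ℝ L, (k : ℝ) • (1 : Module.End ℝ L) - S = (U - 1) * C := by
    refine ⟨-∑ i ∈ Finset.range k, ∑ j ∈ Finset.range i, U ^ j, ?_⟩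
    rw [mul_neg, Finset.mul_sum]
    have : ∀ i ∈ Finset.range k, (U - 1) * ∑ j ∈ Finset.range i, U ^ j = U ^ i - 1 :=
      fun i _ => mul_geom_sum U i
    rw [Finset.sum_congr rfl this, Finset.sum_sub_distrib, Finset.sum_const,
      Finset.card_range, ← hSdef, neg_sub]
    simp [Nat.cast_smul_eq_nsmul ℝ]
  obtain ⟨C, hCeq⟩ := hC
  -- Part 2
  have part2a : h ⊔ m = ⊤ := by
    rw [eq_top_iff]
    intro x _
    have h1 : ((1:ℝ)/k) • S x ∈ h := by
      rw [mem_h, map_smul]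
      congr 1
      have : (U - 1) (S x) = 0 := by
        have := congrArg (fun f : Module.End ℝ L => f x) hUS
        simpa [Module.End.mul_apply] using this
      have := this
      rw [LinearMap.sub_apply, Module.End.one_apply, sub_eq_zero] at this
      exact this
    have h2 : ((1:ℝ)/k) • (((k:ℝ) • x) - S x) ∈ m := by
      apply Submodule.smul_mem
      have : ((k : ℝ) • (1 : Module.End ℝ L) - S) x = (U - 1) (C x) := by
        rw [hCeq]; rfl
      rw [show (k:ℝ) • x - S x = ((k : ℝ) • (1 : Module.End ℝ L) - S) x by
        simp [LinearMap.sub_apply], this]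
      rw [mem_m]
      exact ⟨C x, by simp [LinearMap.sub_apply]⟩
    have hx : x = ((1:ℝ)/k) • S x + ((1:ℝ)/k) • (((k:ℝ) • x) - S x) := by
      rw [← smul_add, add_sub_cancel, smul_smul]
      rw [one_div_mul_cancel hkR, one_smul]
    rw [hx]
    exact Submodule.add_mem_sup h1 h2
  have part2b : h ⊓ m = ⊥ := by
    rw [eq_bot_iff]
    intro x hx
    obtain ⟨hx1, hx2⟩ := Submodule.mem_inf.mp hx
    rw [mem_h] at hx1
    rw [mem_m] at hx2
    obtain ⟨y, hy⟩ := hx2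
    have hpow : ∀ i : ℕ, (U ^ i) x = x := by
      intro i
      induction i with
      | zero => simp
      | succ n ih => rw [pow_succ, Module.End.mul_apply, hx1, ih]
    have hSx : S x = (k : ℝ) • x := by
      rw [hSdef, LinearMap.sum_apply, Finset.sum_congr rfl (fun i _ => hpow i),
        Finset.sum_const, Finset.card_range, Nat.cast_smul_eq_nsmul ℝ]
    have hSx0 : S x = 0 := by
      have : S ((U - 1) y) = 0 := by
        have := congrArg (fun f : Module.End ℝ L => f y) hSU
        simpa [Module.End.mul_apply] using this
      rw [show x = (U - 1) y by simp [LinearMap.sub_apply, hy]]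
      exact this
    rw [hSx] at hSx0
    simpa using (smul_eq_zero.mp hSx0).resolve_left hkR
  -- Part 3
  have part3 : Submodule.map T m = m := by
    have hTU : T * (U - 1) = (U - 1) * T := by
      rw [hUdef]; noncomm_ring
    have hrT : LinearMap.range T = ⊤ := LinearMap.range_eq_top.mpr τ.surjective
    rw [hm]
    calc Submodule.map T (LinearMap.range (U - 1))
        = LinearMap.range (T * (U - 1)) := (LinearMap.range_comp _ _).symm
      _ = LinearMap.range ((U - 1) * T) := by rw [hTU]
      _ = Submodule.map (U - 1) (LinearMap.range T) := LinearMap.range_comp _ _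
      _ = LinearMap.range (U - 1) := by rw [hrT, Submodule.map_top]
  -- Part 4
  have part4 : ∀ ξ ∈ h, ∀ Y ∈ m, ⁅ξ, Y⁆ ∈ m := by
    intro ξ hξ Y hY
    rw [mem_h] at hξ
    rw [mem_m] at hY ⊢
    obtain ⟨y, hy⟩ := hY
    refine ⟨⁅ξ, y⁆, ?_⟩
    have hUlie : U ⁅ξ, y⁆ = ⁅ξ, U y⁆ := by
      rw [hUdef, Module.End.mul_apply, hTlie, hTlie, Module.End.mul_apply,
        show T (T ξ) = ξ from hξ]
    rw [hUlie, ← hy]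
    rw [lie_sub]
  -- commuting/anticommuting of components
  have hg0comm : ∀ a ∈ g0, ∀ Y : L, ⁅a, τ Y⁆ = τ ⁅a, Y⁆ := by
    intro a ha Y
    rw [mem_g0] at ha
    have h1 := hTlie a Y
    rw [ha] at h1
    exact h1.symm
  have hgkcomm : ∀ b ∈ gk, ∀ Y : L, ⁅b, τ Y⁆ = -τ ⁅b, Y⁆ := by
    intro b hb Y
    rw [mem_gk] at hb
    have h1 := hTlie b Y
    rw [hb, neg_lie] at h1
    have h2 : ⁅b, T Y⁆ = -(T ⁅b, Y⁆) := by rw [h1, neg_neg]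
    exact h2
  -- Part 5
  have part5 : (g0 : Set L) = {ξ | ξ ∈ h ∧ ∀ Y ∈ m, ⁅ξ, τ Y⁆ = τ ⁅ξ, Y⁆} := by
    ext ξ
    simp only [SetLike.mem_coe, Set.mem_setOf_eq]
    constructor
    · intro hξ
      exact ⟨hg0h hξ, fun Y _ => hg0comm ξ hξ Y⟩
    · rintro ⟨hξh, hcomm⟩
      obtain ⟨ha, hb, hab⟩ := hdecomp ξ hξh
      set a := ((1:ℝ)/2) • (ξ + T ξ) with hadef
      set b := ((1:ℝ)/2) • (ξ - T ξ) with hbdef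
      have hb0 : b = 0 := by
        apply heff b (hgkh hb)
        intro Y hY
        have h1 : ⁅ξ, τ Y⁆ = τ ⁅a, Y⁆ + -τ ⁅b, Y⁆ := by
          rw [hab, add_lie, hg0comm a ha, hgkcomm b hb]
        have h2 : τ ⁅ξ, Y⁆ = τ ⁅a, Y⁆ + τ ⁅b, Y⁆ := by
          rw [hab, add_lie, ← hTapp, map_add, hTapp, hTapp]
        have h4 := hcomm Y hY
        rw [h1, h2] at h4
        have h5 : τ ⁅b, Y⁆ = 0 := htwo _ (add_left_cancel h4).symm
        have h6 : τ ⁅b, Y⁆ = τ 0 := by rw [h5, ← hTapp, map_zero]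
        exact τ.injective h6
      rw [mem_g0]
      have h7 : ξ - T ξ = 0 := by
        have := hb0
        rw [hbdef] at this
        have := (smul_eq_zero.mp this).resolve_left (by norm_num)
        exact this
      rw [sub_eq_zero] at h7
      exact h7.symm
  -- Part 6
  have part6 : (gk : Set L) = {ξ | ξ ∈ h ∧ ∀ Y ∈ m, ⁅ξ, τ Y⁆ = -τ ⁅ξ, Y⁆} := by
    ext ξ
    simp only [SetLike.mem_coe, Set.mem_setOf_eq]
    constructor
    · intro hξ
      exact ⟨hgkh hξ, fun Y _ => hgkcomm ξ hξ Y⟩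
    · rintro ⟨hξh, hcomm⟩
      obtain ⟨ha, hb, hab⟩ := hdecomp ξ hξh
      set a := ((1:ℝ)/2) • (ξ + T ξ) with hadef
      set b := ((1:ℝ)/2) • (ξ - T ξ) with hbdef
      have ha0 : a = 0 := by
        apply heff a (hg0h ha)
        intro Y hY
        have h1 : ⁅ξ, τ Y⁆ = τ ⁅a, Y⁆ + -τ ⁅b, Y⁆ := by
          rw [hab, add_lie, hg0comm a ha, hgkcomm b hb]
        have h2 : -τ ⁅ξ, Y⁆ = -τ ⁅a, Y⁆ + -τ ⁅b, Y⁆ := by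
          rw [hab, add_lie, ← hTapp, map_add, hTapp, hTapp, neg_add]
        have h4 := hcomm Y hY
        rw [h1, h2] at h4
        have h5 : τ ⁅a, Y⁆ = 0 := htwo _ (add_right_cancel h4)
        have h6 : τ ⁅a, Y⁆ = τ 0 := by rw [h5, ← hTapp, map_zero]
        exact τ.injective h6
      rw [mem_gk]
      have h7 : ξ + T ξ = 0 := by
        have := ha0
        rw [hadef] at this
        exact (smul_eq_zero.mp this).resolve_left (by norm_num)
      have h8 : T ξ = -ξ := by
        rw [eq_neg_iff_add_eq_zero, add_comm]; exact h7
      exact h8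
  exact ⟨⟨part1a, part1b⟩, ⟨part2a, part2b⟩, part3, part4, part5, part6⟩
end

section
/- With the above notation, suppose that (τ|_𝔪)^k = -id_𝔪 (note τ(𝔪) = 𝔪, so τ|_𝔪 makes sense). Then [𝔪, 𝔪] ⊆ 𝔥, i.e. the bracket of any two elements of 𝔪 lies in ker(τ∘τ - id). -/
/-- Let `𝔤` be a real Lie algebra, `k ≥ 1`, and `τ` a Lie algebra automorphism of `𝔤`
with `τ^{2k} = id`.  Set `𝔥 := ker (τ∘τ - id)` and `𝔪 := range (τ∘τ - id)`.  If
`(τ|_𝔪)^k = -id_𝔪` (note `τ(𝔪) = 𝔪`), then `⁅𝔪, 𝔪⁆ ⊆ 𝔥`: the bracket of any two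
elements of `𝔪` lies in `ker (τ∘τ - id)`. -/
theorem stmt_9 {L : Type*} [LieRing L] [LieAlgebra ℝ L]
    (k : ℕ) (hk : 1 ≤ k) (τ : L ≃ₗ⁅ℝ⁆ L)
    (hτ : (τ.toLieHom.toLinearMap : Module.End ℝ L) ^ (2 * k) = 1)
    (h m : Submodule ℝ L)
    (hh : h = LinearMap.ker
      ((τ.toLieHom.toLinearMap : Module.End ℝ L) * τ.toLieHom.toLinearMap - 1))
    (hm : m = LinearMap.range
      ((τ.toLieHom.toLinearMap : Module.End ℝ L) * τ.toLieHom.toLinearMap - 1))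
    (hτm : ∀ x ∈ m, ((τ.toLieHom.toLinearMap : Module.End ℝ L) ^ k) x = -x) :
    ∀ x ∈ m, ∀ y ∈ m, ⁅x, y⁆ ∈ h := by
  intro x hx y hy
  set f : Module.End ℝ L := (τ.toLieHom.toLinearMap : Module.End ℝ L) with hf
  set A : Module.End ℝ L := f * f with hA
  set B : Module.End ℝ L := A - 1 with hB
  have hAk : A ^ k = 1 := by rw [hA, ← sq, ← pow_mul]; exact hτ
  have hfl : ∀ a b : L, f ⁅a, b⁆ = ⁅f a, f b⁆ := fun a b => τ.toLieHom.map_lie a b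
  have hpowl : ∀ n : ℕ, ∀ a b : L, (f ^ n) ⁅a, b⁆ = ⁅(f ^ n) a, (f ^ n) b⁆ := by
    intro n
    induction n with
    | zero => simp
    | succ n ih =>
      intro a b
      simp only [pow_succ, Module.End.mul_apply, hfl, ih]
  set z : L := ⁅x, y⁆ with hz
  have hfz : (f ^ k) z = z := by
    rw [hz, hpowl, hτm x hx, hτm y hy, lie_neg, neg_lie, neg_neg]
  set S : Module.End ℝ L := ∑ i ∈ Finset.range k, A ^ i with hS
  have hcommAS : Commute A S :=
    Commute.sum_right _ _ _ (fun i _ => (Commute.refl A).pow_right i)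
  have hSB : S * B = 0 := by rw [hS, hB, geom_sum_mul, hAk, sub_self]
  have hcommSB : Commute S B := hcommAS.symm.sub_right (Commute.one_right S)
  have hBS : B * S = 0 := by rw [← hcommSB.eq, hSB]
  have hkR : (k : ℝ) ≠ 0 := Nat.cast_ne_zero.mpr (by omega)
  -- h ∩ m = 0
  have hcap : ∀ w : L, w ∈ h → w ∈ m → w = 0 := by
    intro w hwh hwm
    rw [hh] at hwh; rw [hm] at hwm
    obtain ⟨v, hv⟩ := hwm
    have hBw : B w = 0 := hwh
    have hAw : A w = w := by
      have h1 : A w - w = 0 := by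
        simpa [hB, LinearMap.sub_apply] using hBw
      linear_combination (norm := abel) h1
    have hAiw : ∀ i : ℕ, (A ^ i) w = w := by
      intro i
      induction i with
      | zero => simp
      | succ i ih => rw [pow_succ', Module.End.mul_apply, ih, hAw]
    have hSw : S w = (k : ℝ) • w := by
      rw [hS]
      simp only [LinearMap.sum_apply, Finset.sum_apply, hAiw, Finset.sum_const,
        Finset.card_range, ← Nat.cast_smul_eq_nsmul ℝ]
    have hSw0 : S w = 0 := by
      rw [← hv, ← Module.End.mul_apply, hSB, LinearMap.zero_apply]
    rw [hSw0] at hSw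
    exact (smul_eq_zero.mp hSw.symm).resolve_left hkR
  -- decomposition of (k:ℝ) • z
  have hSzh : S z ∈ h := by
    rw [hh]
    show B (S z) = 0
    rw [← Module.End.mul_apply, hBS, LinearMap.zero_apply]
  have hwm : (k : ℝ) • z - S z ∈ m := by
    rw [hm]
    have hd : (k : ℝ) • z - S z = ∑ i ∈ Finset.range k, (z - (A ^ i) z) := by
      rw [Finset.sum_sub_distrib]
      simp [hS, Finset.sum_const, ← Nat.cast_smul_eq_nsmul ℝ]
    rw [hd]
    apply Submodule.sum_mem
    intro i _
    refine ⟨-((∑ j ∈ Finset.range i, A ^ j) z), ?_⟩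
    have hgi : B * (∑ j ∈ Finset.range i, A ^ j) = A ^ i - 1 := by
      have hc : Commute A (∑ j ∈ Finset.range i, A ^ j) :=
        Commute.sum_right _ _ _ (fun j _ => (Commute.refl A).pow_right j)
      have hc' : Commute (∑ j ∈ Finset.range i, A ^ j) B :=
        hc.symm.sub_right (Commute.one_right _)
      rw [← hc'.eq, hB, geom_sum_mul]
    have := congrArg (fun (T : Module.End ℝ L) => T z) hgi
    simp only [Module.End.mul_apply, LinearMap.sub_apply, Module.End.one_apply] at this
    rw [map_neg, this]
    abel
  -- h is invariant under f ^ k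
  have hfkh : ∀ u : L, u ∈ h → (f ^ k) u ∈ h := by
    intro u hu
    rw [hh] at hu ⊢
    have hc : Commute B (f ^ k) := by
      have h1 : Commute f B := by
        rw [hB, hA]
        exact (((Commute.refl f).mul_right (Commute.refl f)).sub_right (Commute.one_right f))
      exact (h1.pow_left k).symm
    show B ((f ^ k) u) = 0
    rw [← Module.End.mul_apply, hc.eq, Module.End.mul_apply, hu, map_zero]
  -- put it together
  set w : L := (k : ℝ) • z - S z with hw
  have hfkw : (f ^ k) w = -w := hτm w (hm ▸ hwm)
  have hfkz : (f ^ k) ((k : ℝ) • z) = (k : ℝ) • z := by rw [map_smul, hfz]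
  have hfkS : (f ^ k) (S z) = S z + 2 • w := by
    have e1 : (f ^ k) (S z) = (k : ℝ) • z + w := by
      have : S z = (k : ℝ) • z - w := by rw [hw]; abel
      rw [this, map_sub, hfkz, hfkw, sub_neg_eq_add]
    rw [e1, hw]
    abel
  have h2w : (2 : ℕ) • w ∈ h := by
    have h1 : S z + 2 • w ∈ h := by rw [← hfkS]; exact hfkh (S z) hSzh
    have := Submodule.sub_mem h h1 hSzh
    simpa using this
  have h2w' : (2 : ℕ) • w ∈ m := Submodule.smul_of_tower_mem m 2 hwm
  have hw0 : (2 : ℕ) • w = 0 := hcap _ h2w h2w'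
  have hw00 : w = 0 := by
    have : (2 : ℝ) • w = 0 := by
      rw [← hw0]; simp [← Nat.cast_smul_eq_nsmul ℝ]
    exact (smul_eq_zero.mp this).resolve_left (by norm_num)
  have hkz : (k : ℝ) • z ∈ h := by
    have : (k : ℝ) • z = S z := by
      have := hw00
      rw [hw] at this
      linear_combination (norm := abel) this
    rw [this]; exact hSzh
  have : z = (k : ℝ)⁻¹ • ((k : ℝ) • z) := by
    rw [smul_smul, inv_mul_cancel₀ hkR, one_smul]
  rw [this]
  exact Submodule.smul_mem h _ hkz
end

section
/- With the above notation, suppose that k is odd, that (τ|_𝔪)^k = -id_𝔪 (note τ(𝔪) = 𝔪), and that the pair (𝔤, 𝔥) is effective, i.e. the only ξ ∈ 𝔥 with [ξ, Y] = 0 for all Y ∈ 𝔪 is ξ = 0. Then 𝔤_k = ker(τ + id) = {0} (the trivial case). -/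
/-- Let `𝔤` be a real Lie algebra, `k ≥ 1` odd, and `τ` a Lie algebra automorphism of
`𝔤` with `τ^{2k} = id`.  Set `𝔤_k := ker (τ + id)`, `𝔥 := ker (τ∘τ - id)` and
`𝔪 := range (τ∘τ - id)`.  If `(τ|_𝔪)^k = -id_𝔪` and `(𝔤, 𝔥)` is effective (the only
`ξ ∈ 𝔥` with `⁅ξ, Y⁆ = 0` for all `Y ∈ 𝔪` is `ξ = 0`), then `𝔤_k = {0}`
(the trivial case). -/
theorem stmt_10 {L : Type*} [LieRing L] [LieAlgebra ℝ L]
    (k : ℕ) (hk : 1 ≤ k) (hodd : Odd k) (τ : L ≃ₗ⁅ℝ⁆ L)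
    (hτ : (τ.toLieHom.toLinearMap : Module.End ℝ L) ^ (2 * k) = 1)
    (gk h m : Submodule ℝ L)
    (hgk : gk = LinearMap.ker ((τ.toLieHom.toLinearMap : Module.End ℝ L) + 1))
    (hh : h = LinearMap.ker
      ((τ.toLieHom.toLinearMap : Module.End ℝ L) * τ.toLieHom.toLinearMap - 1))
    (hm : m = LinearMap.range
      ((τ.toLieHom.toLinearMap : Module.End ℝ L) * τ.toLieHom.toLinearMap - 1))
    (hτm : ∀ x ∈ m, ((τ.toLieHom.toLinearMap : Module.End ℝ L) ^ k) x = -x)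
    (heff : ∀ ξ ∈ h, (∀ Y ∈ m, ⁅ξ, Y⁆ = (0 : L)) → ξ = 0) :
    gk = ⊥ := by
  set T : Module.End ℝ L := (τ.toLieHom.toLinearMap : Module.End ℝ L) with hT
  have hlie : ∀ a b : L, T ⁅a, b⁆ = ⁅T a, T b⁆ := fun a b => τ.toLieHom.map_lie a b
  have hpowlie : ∀ (n : ℕ) (a b : L), (T ^ n) ⁅a, b⁆ = ⁅(T ^ n) a, (T ^ n) b⁆ := by
    intro n
    induction n with
    | zero => simp
    | succ n ih =>
      intro a b
      simp only [pow_succ', Module.End.mul_apply, hlie, ih]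
  rw [Submodule.eq_bot_iff]
  intro x hx
  rw [hgk, LinearMap.mem_ker, LinearMap.add_apply, Module.End.one_apply] at hx
  have hTx : T x = -x := eq_neg_of_add_eq_zero_left hx
  have hT2x : T (T x) = x := by rw [hTx, map_neg, hTx, neg_neg]
  have hxh : x ∈ h := by
    rw [hh, LinearMap.mem_ker]
    simp [LinearMap.sub_apply, Module.End.mul_apply, hT2x]
  have hpowx : ∀ n : ℕ, (T ^ n) x = ((-1 : ℝ) ^ n) • x := by
    intro n
    induction n with
    | zero => simp
    | succ n ih =>
      rw [pow_succ', Module.End.mul_apply, ih, map_smul, hTx, pow_succ]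
      module
  have hTkx : (T ^ k) x = -x := by
    rw [hpowx, hodd.neg_one_pow]; module
  refine heff x hxh ?_
  intro Y hY
  -- ⁅x, Y⁆ ∈ m
  obtain ⟨z, hz⟩ := hm ▸ hY
  have hZm : ⁅x, Y⁆ ∈ m := by
    rw [hm]
    refine ⟨⁅x, z⁆, ?_⟩
    have : (T * T - 1) ⁅x, z⁆ = ⁅x, (T * T - 1) z⁆ := by
      simp only [LinearMap.sub_apply, Module.End.mul_apply, Module.End.one_apply, hlie, hT2x, lie_sub]
    rw [this, hz]
  have h1 : (T ^ k) ⁅x, Y⁆ = -⁅x, Y⁆ := hτm _ hZm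
  have h2 : (T ^ k) ⁅x, Y⁆ = ⁅x, Y⁆ := by
    rw [hpowlie, hTkx, hτm Y hY, lie_neg, neg_lie, neg_neg]
  have : ⁅x, Y⁆ = -⁅x, Y⁆ := by rw [← h1, h2]
  have h3 : (2 : ℝ) • ⁅x, Y⁆ = 0 := by
    rw [two_smul]
    nth_rewrite 2 [this]
    exact add_neg_cancel _
  simpa using (smul_eq_zero.mp h3).resolve_left (by norm_num)
end

section
/- Suppose E decomposes as an internal direct sum E = E⁺ ⊕ E⁻ with J(E⁺) ⊆ E⁺ and J(E⁻) ⊆ E⁻. Let B : E × E → E be an ℝ-bilinear map such that, writing B^{**} := B - B^{-,-} and using sign multiplication on {+,-}: B^{**}(X,Y) ∈ E^{αα'} and B^{-,-}(X,Y) ∈ E^{-αα'} whenever X ∈ E^α and Y ∈ E^{α'}, for all α, α' ∈ {+,-}. Define J^⋆ ∈ End(E) by J^⋆ = J on E⁺ and J^⋆ = -J on E⁻. Then J^⋆ ∘ J^⋆ = -id and J⋆B = J^⋆·B, i.e. (J⋆B)(X,Y) = -J^⋆(B(J^⋆X, J^⋆Y)) for all X, Y ∈ E. -/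
section

variable {E : Type*} [AddCommGroup E] [Module ℝ E]

/-- The action `(J·B)(X,Y) = -J(B(JX,JY))`. -/
def Jdot (J : E →ₗ[ℝ] E) (B : E → E → E) : E → E → E :=
  fun X Y => -J (B (J X) (J Y))

/-- The action `(J⟲B)(X,Y) = B(JX,Y) + B(X,JY) - J(B(X,Y))`. -/
def Jcirc (J : E →ₗ[ℝ] E) (B : E → E → E) : E → E → E :=
  fun X Y => B (J X) Y + B X (J Y) - J (B X Y)

/-- The action `J⋆B = (1/2)·(J·B + J⟲B)`. -/
noncomputable def Jstar (J : E →ₗ[ℝ] E) (B : E → E → E) : E → E → E :=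
  fun X Y => (2⁻¹ : ℝ) • (Jdot J B X Y + Jcirc J B X Y)

/-- The `(ε, ε')`-component `B^{ε,ε'}` of `B` with respect to `J`. -/
noncomputable def Jcomp (J : E →ₗ[ℝ] E) (B : E → E → E) (ε ε' : ℝ) : E → E → E :=
  fun X Y =>
    -(4⁻¹ : ℝ) • ((ε * ε') • B (J X) (J Y) + ε • J (B (J X) Y) + ε' • J (B X (J Y))
      - B X Y)

/-- Suppose `E = E⁺ ⊕ E⁻` with both summands `J`-invariant, and let `B` be bilinear
with, for all `α, α' ∈ {+,-}`: `B^{**}(E^α, E^{α'}) ⊆ E^{αα'}` and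
`B^{--}(E^α, E^{α'}) ⊆ E^{-αα'}`, where `B^{**} := B - B^{-,-}`.  Define
`J⋆ = J` on `E⁺` and `J⋆ = -J` on `E⁻`.  Then `J⋆ ∘ J⋆ = -id` and `J⋆B = J⋆·B`,
i.e. `(J⋆B)(X,Y) = -J⋆(B(J⋆X, J⋆Y))` for all `X, Y`. -/
theorem stmt_18 (J : E →ₗ[ℝ] E) (hJ : ∀ x, J (J x) = -x)
    (Ep Em : Submodule ℝ E) (hcompl : IsCompl Ep Em)
    (hJp : ∀ x ∈ Ep, J x ∈ Ep) (hJm : ∀ x ∈ Em, J x ∈ Em)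
    (B : E →ₗ[ℝ] E →ₗ[ℝ] E)
    (hpp : ∀ X ∈ Ep, ∀ Y ∈ Ep,
      (B X Y - Jcomp J (fun X Y => B X Y) (-1) (-1) X Y) ∈ Ep ∧
      Jcomp J (fun X Y => B X Y) (-1) (-1) X Y ∈ Em)
    (hpm : ∀ X ∈ Ep, ∀ Y ∈ Em,
      (B X Y - Jcomp J (fun X Y => B X Y) (-1) (-1) X Y) ∈ Em ∧
      Jcomp J (fun X Y => B X Y) (-1) (-1) X Y ∈ Ep)
    (hmp : ∀ X ∈ Em, ∀ Y ∈ Ep,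
      (B X Y - Jcomp J (fun X Y => B X Y) (-1) (-1) X Y) ∈ Em ∧
      Jcomp J (fun X Y => B X Y) (-1) (-1) X Y ∈ Ep)
    (hmm : ∀ X ∈ Em, ∀ Y ∈ Em,
      (B X Y - Jcomp J (fun X Y => B X Y) (-1) (-1) X Y) ∈ Ep ∧
      Jcomp J (fun X Y => B X Y) (-1) (-1) X Y ∈ Em)
    (K : E →ₗ[ℝ] E) (hKp : ∀ x ∈ Ep, K x = J x) (hKm : ∀ x ∈ Em, K x = -J x) :
    (∀ x, K (K x) = -x) ∧
    (∀ X Y, Jstar J (fun X Y => B X Y) X Y = -K (B (K X) (K Y))) := by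
  have hK2 : ∀ x, K (K x) = -x := by
    intro x
    obtain ⟨p, m, hp, hm, rfl⟩ :=
      Submodule.codisjoint_iff_exists_add_eq.mp hcompl.codisjoint x
    rw [map_add, hKp p hp, hKm m hm, map_add, hKp _ (hJp p hp), map_neg,
      hKm _ (hJm m hm), hJ, hJ, neg_neg, neg_add]
  refine ⟨hK2, ?_⟩
  set C : E → E → E := Jcomp J (fun X Y => B X Y) (-1) (-1) with hCdef
  -- purely algebraic identity
  have alg : ∀ X Y : E, Jstar J (fun X Y => B X Y) X Y
      = -J (B (J X) (J Y)) + (2:ℝ) • J (C (J X) (J Y)) := by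
    intro X Y
    simp only [hCdef, Jstar, Jdot, Jcirc, Jcomp, hJ, map_add, map_sub, map_neg, map_smul,
      LinearMap.add_apply, LinearMap.sub_apply, LinearMap.neg_apply, LinearMap.smul_apply,
      smul_add, smul_sub, smul_neg, neg_neg]
    module
  -- K applied to B u v when the components sit in (Ep, Em)
  have keyP : ∀ u v : E, (B u v - C u v) ∈ Ep → C u v ∈ Em →
      K (B u v) = J (B u v) - (2:ℝ) • J (C u v) := by
    intro u v h1 h2
    have hs : B u v = (B u v - C u v) + C u v := by abel
    rw [congrArg K hs, map_add, hKp _ h1, hKm _ h2, map_sub]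
    module
  have keyM : ∀ u v : E, (B u v - C u v) ∈ Em → C u v ∈ Ep →
      K (B u v) = -J (B u v) + (2:ℝ) • J (C u v) := by
    intro u v h1 h2
    have hs : B u v = (B u v - C u v) + C u v := by abel
    rw [congrArg K hs, map_add, hKm _ h1, hKp _ h2, map_sub]
    module
  -- the statement on pure vectors
  have pure : ∀ X Y : E, (X ∈ Ep ∨ X ∈ Em) → (Y ∈ Ep ∨ Y ∈ Em) →
      Jstar J (fun X Y => B X Y) X Y = -K (B (K X) (K Y)) := by
    intro X Y hX hY
    rw [alg]
    rcases hX with hX | hX <;> rcases hY with hY | hY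
    · have h := hpp (J X) (hJp X hX) (J Y) (hJp Y hY)
      rw [hKp X hX, hKp Y hY, keyP _ _ h.1 h.2]
      abel
    · have h := hpm (J X) (hJp X hX) (J Y) (hJm Y hY)
      rw [hKp X hX, hKm Y hY]
      simp only [map_neg, LinearMap.neg_apply, neg_neg]
      rw [keyM _ _ h.1 h.2]
    · have h := hmp (J X) (hJm X hX) (J Y) (hJp Y hY)
      rw [hKm X hX, hKp Y hY]
      simp only [map_neg, LinearMap.neg_apply, neg_neg]
      rw [keyM _ _ h.1 h.2]
    · have h := hmm (J X) (hJm X hX) (J Y) (hJm Y hY)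
      rw [hKm X hX, hKm Y hY]
      simp only [map_neg, LinearMap.neg_apply, neg_neg]
      rw [keyP _ _ h.1 h.2]
      abel
  -- bilinearity of both sides
  intro X Y
  obtain ⟨xp, xm, hxp, hxm, hx⟩ :=
    Submodule.codisjoint_iff_exists_add_eq.mp hcompl.codisjoint X
  obtain ⟨yp, ym, hyp, hym, hy⟩ :=
    Submodule.codisjoint_iff_exists_add_eq.mp hcompl.codisjoint Y
  subst hx hy
  have addL : Jstar J (fun X Y => B X Y) (xp + xm) (yp + ym)
      = Jstar J (fun X Y => B X Y) xp yp + Jstar J (fun X Y => B X Y) xp ym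
        + Jstar J (fun X Y => B X Y) xm yp + Jstar J (fun X Y => B X Y) xm ym := by
    simp only [Jstar, Jdot, Jcirc, map_add, LinearMap.add_apply, smul_add]
    module
  rw [addL, pure xp yp (Or.inl hxp) (Or.inl hyp), pure xp ym (Or.inl hxp) (Or.inr hym),
    pure xm yp (Or.inr hxm) (Or.inl hyp), pure xm ym (Or.inr hxm) (Or.inr hym)]
  simp only [map_add, LinearMap.add_apply]
  abel

end
end
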